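/- (Quantile bound via the f₁-divergence, product form.) Let 0 < ε ≤ 2/e (so that log(2/ε) ≥ 1). Then P({ω : r(ω) > 2·log(2/ε)·M}) ≤ ε/2, where M = 1 + log(1 + D). -/

import Mathlib

open MeasureTheory

/-- Quantile bound via the `f₁`-divergence, product form: for `0 < ε ≤ 2/e`,
`P({ω : r ω > 2·log(2/ε)·M}) ≤ ε/2`, where `M = 1 + log(1 + D)` and
`D = ∫ f₁(r) dQ` with `f₁(x) = x·exp(x−1) − 1`. -/
theorem stmt5 {Ω : Type*} [MeasurableSpace Ω]
    (P Q : Measure Ω) [IsProbabilityMeasure P] [IsProbabilityMeasure Q]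
    (r : Ω → ℝ) (hr_meas : Measurable r) (hr_nonneg : ∀ ω, 0 ≤ r ω)
    (hPQ : ∀ A : Set Ω, MeasurableSet A → (P A).toReal = ∫ ω in A, r ω ∂Q)
    (hint : Integrable (fun ω => r ω * Real.exp (r ω)) Q)
    (D : ℝ) (hD : D = ∫ ω, (r ω * Real.exp (r ω - 1) - 1) ∂Q)
    (M : ℝ) (hM : M = 1 + Real.log (1 + D))
    (ε : ℝ) (hε0 : 0 < ε) (hε1 : ε ≤ 2 / Real.exp 1) :
    (P {ω | 2 * Real.log (2 / ε) * M < r ω}).toReal ≤ ε / 2 := by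
  set L := Real.log (2 / ε) with hLdef
  have hexp1 : Real.exp 1 ≤ 2 / ε := by
    rw [le_div_iff₀ hε0]
    have h2 : ε * Real.exp 1 ≤ 2 := by
      have := mul_le_mul_of_nonneg_right hε1 (Real.exp_pos 1).le
      rwa [div_mul_cancel₀ _ (Real.exp_pos 1).ne'] at this
    nlinarith
  have hL : 1 ≤ L := by
    rw [hLdef, Real.le_log_iff_exp_le (by positivity)]
    exact hexp1
  set g : Ω → ℝ := fun ω => r ω * Real.exp (r ω - 1) with hg
  have hg_nonneg : ∀ ω, 0 ≤ g ω := fun ω => mul_nonneg (hr_nonneg ω) (Real.exp_pos _).le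
  have hg_int : Integrable g Q := by
    have heq : g = fun ω => (r ω * Real.exp (r ω)) * Real.exp (-1) := by
      funext ω
      rw [hg]
      simp only [Real.exp_sub, Real.exp_neg]
      ring_nf
    rw [heq]
    exact hint.mul_const _
  have hr_int : Integrable r Q := by
    apply hint.mono hr_meas.aestronglyMeasurable
    filter_upwards with ω
    rw [Real.norm_eq_abs, Real.norm_eq_abs, abs_of_nonneg (hr_nonneg ω),
        abs_of_nonneg (mul_nonneg (hr_nonneg ω) (Real.exp_pos _).le)]
    nlinarith [Real.one_le_exp (hr_nonneg ω), hr_nonneg ω]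
  have hr_integral : ∫ ω, r ω ∂Q = 1 := by
    have h := hPQ Set.univ MeasurableSet.univ
    rw [setIntegral_univ] at h
    simp [measure_univ] at h
    linarith
  have hintg : ∫ ω, g ω ∂Q = 1 + D := by
    rw [hD, integral_sub hg_int (integrable_const 1), integral_const, probReal_univ]
    simp
  have hDpt : ∀ ω, 2 * r ω - 1 ≤ g ω := by
    intro ω
    have h1 : r ω ≤ Real.exp (r ω - 1) := by
      have := Real.add_one_le_exp (r ω - 1); linarith
    have h2 : 0 ≤ r ω * (Real.exp (r ω - 1) - r ω) :=
      mul_nonneg (hr_nonneg ω) (by linarith)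
    have h3 := sq_nonneg (r ω - 1)
    show 2 * r ω - 1 ≤ r ω * Real.exp (r ω - 1)
    nlinarith
  have hD0 : 0 ≤ D := by
    have hmono : ∫ ω, (2 * r ω - 1) ∂Q ≤ ∫ ω, g ω ∂Q := by
      apply integral_mono ((hr_int.const_mul 2).sub (integrable_const 1)) hg_int
      intro ω; exact hDpt ω
    rw [hintg, integral_sub (hr_int.const_mul 2) (integrable_const 1),
        integral_const_mul, hr_integral, integral_const, probReal_univ] at hmono
    simp at hmono
    linarith
  have hlog0 : 0 ≤ Real.log (1 + D) := Real.log_nonneg (by linarith)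
  set t := 2 * L * M with ht
  set A := {ω | t < r ω} with hA
  have hA_meas : MeasurableSet A := measurableSet_lt measurable_const hr_meas
  have hPA : (P A).toReal = ∫ ω in A, r ω ∂Q := hPQ A hA_meas
  have step1 : ∫ ω in A, r ω ∂Q ≤ ∫ ω in A, g ω * Real.exp (1 - t) ∂Q := by
    apply setIntegral_mono_on hr_int.integrableOn (hg_int.mul_const _).integrableOn hA_meas
    intro ω hω
    have hωt : t < r ω := hω
    have h1 : (1:ℝ) ≤ Real.exp (r ω - 1) * Real.exp (1 - t) := by
      rw [← Real.exp_add]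
      have : (0:ℝ) ≤ r ω - 1 + (1 - t) := by linarith
      calc (1:ℝ) = Real.exp 0 := Real.exp_zero.symm
        _ ≤ _ := Real.exp_le_exp.mpr (by linarith)
    calc r ω = r ω * 1 := (mul_one _).symm
      _ ≤ r ω * (Real.exp (r ω - 1) * Real.exp (1 - t)) :=
          mul_le_mul_of_nonneg_left h1 (hr_nonneg ω)
      _ = g ω * Real.exp (1 - t) := by rw [hg]; ring
  have step2 : ∫ ω in A, g ω * Real.exp (1 - t) ∂Q ≤ ∫ ω, g ω * Real.exp (1 - t) ∂Q := by
    apply setIntegral_le_integral (hg_int.mul_const _)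
    filter_upwards with ω
    exact mul_nonneg (hg_nonneg ω) (Real.exp_pos _).le
  have step3 : ∫ ω, g ω * Real.exp (1 - t) ∂Q = (1 + D) * Real.exp (1 - t) := by
    rw [integral_mul_const, hintg]
  have step4 : (1 + D) * Real.exp (1 - t) ≤ ε / 2 := by
    have h1D : (0:ℝ) < 1 + D := by linarith
    have heq : (1 + D) * Real.exp (1 - t) = Real.exp (Real.log (1 + D) + (1 - t)) := by
      rw [Real.exp_add, Real.exp_log h1D]
    have heps : ε / 2 = Real.exp (Real.log (ε / 2)) := (Real.exp_log (by positivity)).symm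
    rw [heq, heps]
    apply Real.exp_le_exp.mpr
    have hlogeq : Real.log (ε / 2) = -L := by
      rw [hLdef, ← Real.log_inv]
      congr 1
      field_simp
    rw [hlogeq]
    have htval : t = 2 * L + 2 * L * Real.log (1 + D) := by rw [ht, hM]; ring
    nlinarith [mul_le_mul_of_nonneg_right hL hlog0]
  calc (P A).toReal = ∫ ω in A, r ω ∂Q := hPA
    _ ≤ ∫ ω in A, g ω * Real.exp (1 - t) ∂Q := step1
    _ ≤ ∫ ω, g ω * Real.exp (1 - t) ∂Q := step2
    _ = (1 + D) * Real.exp (1 - t) := step3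
    _ ≤ ε / 2 := step4
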